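/- arXiv:2503.20329 — 3 statements merged into one kernel-verified Lean document; each statement's English description precedes it below -/
import Mathlib

section
/- If G is a 3-edge-connected finite simple graph of order n that is not a complete graph, then y_G ≤ min{⌊n/2⌋ − 1, ⌊3·χ(G^c)/2⌋ − 1}, where G^c is the complement of G and χ denotes the chromatic number. -/
open SimpleGraph

/-- The number of connected components of a graph. -/
noncomputable def numComp {V : Type*} (G : SimpleGraph V) : ℕ :=
  Nat.card G.ConnectedComponent

/-- `y_G(A) = 2 c(G - A) - |A| - 1`. -/
noncomputable def yVal {V : Type*} (G : SimpleGraph V) (A : Set (Sym2 V)) : ℤ :=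
  2 * (numComp (G.deleteEdges A) : ℤ) - (A.ncard : ℤ) - 1

/-- `y_G = max_{A ⊆ E(G)} y_G(A)`. -/
noncomputable def yMax {V : Type*} (G : SimpleGraph V) : ℤ :=
  sSup { y : ℤ | ∃ A ⊆ G.edgeSet, yVal G A = y }


/-- A finite simple graph is `k`-edge-connected if it has at least two vertices and removing
fewer than `k` edges leaves it connected. -/
def EdgeConnected {V : Type*} (G : SimpleGraph V) (k : ℕ) : Prop :=
  1 < Nat.card V ∧ ∀ A ⊆ G.edgeSet, A.ncard < k → (G.deleteEdges A).Connected

open Finset in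
open scoped Classical in
/-- Boundary lemma: ordered cross pairs out of a proper nonempty union of components
number at least 3. -/
lemma boundary_pairs {V : Type*} [Fintype V] (G : SimpleGraph V) (hG : EdgeConnected G 3)
    (A : Set (Sym2 V))
    (S : Set ((G.deleteEdges A).ConnectedComponent))
    (hS1 : S.Nonempty) (hS2 : S ≠ Set.univ) :
    3 ≤ (Finset.univ.filter (fun p : V × V => G.Adj p.1 p.2 ∧
        (G.deleteEdges A).connectedComponentMk p.1 ∈ S ∧
        (G.deleteEdges A).connectedComponentMk p.2 ∉ S)).card := by
  let f := (G.deleteEdges A).connectedComponentMk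
  let B : Set (Sym2 V) := {e | ∃ u v, e = s(u, v) ∧ G.Adj u v ∧ f u ∈ S ∧ f v ∉ S}
  have hBE : B ⊆ G.edgeSet := by
    rintro e ⟨u, v, rfl, h, -, -⟩; exact h
  have hdisc : ¬ (G.deleteEdges B).Connected := by
    intro hcon
    obtain ⟨Cu, hCu⟩ := hS1
    obtain ⟨C', hC'⟩ := Set.ne_univ_iff_exists_notMem S |>.mp hS2
    obtain ⟨u, hu⟩ := Cu.exists_rep
    obtain ⟨w, hw⟩ := C'.exists_rep
    have hkey : ∀ x y (p : (G.deleteEdges B).Walk x y), f x ∈ S → f y ∈ S := by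
      intro x y p
      induction p with
      | nil => exact id
      | @cons x z y h p ih =>
        intro hx
        apply ih
        by_contra hz
        rw [deleteEdges_adj] at h
        exact h.2 ⟨x, z, rfl, h.1, hx, hz⟩
    obtain ⟨p⟩ := hcon.preconnected u w
    have h1 : f u ∈ S := by rw [show f u = Cu from hu]; exact hCu
    have h2 := hkey u w p h1
    rw [show f w = C' from hw] at h2
    exact hC' h2
  have hB3 : 3 ≤ B.ncard := by
    by_contra h
    exact hdisc (hG.2 B hBE (by omega))
  have hBfin : B.Finite := Set.toFinite B
  rw [Set.ncard_eq_toFinset_card B hBfin] at hB3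
  refine hB3.trans (Finset.card_le_card_of_surjOn (fun p => s(p.1, p.2)) ?_)
  rintro e he
  rw [Set.Finite.coe_toFinset] at he
  obtain ⟨u, v, rfl, hadj, hu, hv⟩ := he
  refine ⟨(u, v), ?_, rfl⟩
  simp only [Finset.coe_filter, Set.mem_setOf_eq, Finset.mem_univ, true_and]
  exact ⟨hadj, hu, hv⟩

open Finset in
open scoped Classical in
lemma key_counting {V : Type*} [Fintype V] (G : SimpleGraph V) (hG : EdgeConnected G 3)
    {A : Set (Sym2 V)} (hA : A ⊆ G.edgeSet)
    (hc2 : 2 ≤ numComp (G.deleteEdges A)) :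
    3 * numComp (G.deleteEdges A) ≤ 2 * A.ncard ∧
    ∀ k : ℕ, 2 ≤ k → (Gᶜ).Colorable k →
      4 * numComp (G.deleteEdges A) ≤ 2 * A.ncard + 3 * k := by
  haveI : Fintype (G.deleteEdges A).ConnectedComponent := Fintype.ofFinite _
  set f := (G.deleteEdges A).connectedComponentMk with hfdef
  have hcc : numComp (G.deleteEdges A) = Fintype.card (G.deleteEdges A).ConnectedComponent :=
    Nat.card_eq_fintype_card
  set D : Finset (V × V) := Finset.univ.filter (fun p : V × V => G.Adj p.1 p.2 ∧ f p.1 ≠ f p.2)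
    with hDdef
  -- Step 1 : D.card ≤ 2 * A.ncard
  have hAfin : A.Finite := Set.toFinite A
  have step1 : D.card ≤ 2 * A.ncard := by
    rw [Set.ncard_eq_toFinset_card A hAfin]
    refine Finset.card_le_mul_card_image_of_maps_to (f := fun p : V × V => s(p.1, p.2))
      (t := hAfin.toFinset) ?_ 2 ?_
    · rintro ⟨u, v⟩ hp
      rw [hDdef, Finset.mem_filter] at hp
      obtain ⟨-, hadj, hne⟩ := hp
      rw [Set.Finite.mem_toFinset]
      by_contra hmem
      exact hne (ConnectedComponent.sound ((deleteEdges_adj.mpr ⟨hadj, hmem⟩).reachable))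
    · intro b _
      induction b using Sym2.inductionOn with
      | hf u v =>
        refine le_trans (Finset.card_le_card ?_)
          ((Finset.card_insert_le (u, v) {(v, u)}).trans (by simp))
        intro p hp
        rw [Finset.mem_filter] at hp
        have := hp.2
        rw [Sym2.eq_iff] at this
        rcases this with ⟨h1, h2⟩ | ⟨h1, h2⟩
        · simp [Prod.ext_iff, h1, h2]
        · simp [Prod.ext_iff, h1, h2]
  -- Step 2 : each single-component first-coordinate fiber has ≥ 3 elements
  have hCne : ∀ C : (G.deleteEdges A).ConnectedComponent,
      ∃ C', C' ≠ C := by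
    intro C
    have : 1 < Fintype.card (G.deleteEdges A).ConnectedComponent := by omega
    exact Fintype.exists_ne_of_one_lt_card this C
  have step2 : ∀ C : (G.deleteEdges A).ConnectedComponent,
      3 ≤ (D.filter (fun p => f p.1 = C)).card := by
    intro C
    refine le_trans (boundary_pairs G hG A {C} ⟨C, rfl⟩ ?_) (Finset.card_le_card ?_)
    · obtain ⟨C', hC'⟩ := hCne C
      intro h
      have : C' ∈ ({C} : Set _) := by rw [h]; trivial
      exact hC' this
    · intro p hp
      simp only [Finset.mem_filter, Finset.mem_univ, true_and, Set.mem_singleton_iff] at hp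
      obtain ⟨hadj, h1, h2⟩ := hp
      rw [← hfdef] at h1 h2
      rw [Finset.mem_filter, hDdef, Finset.mem_filter]
      exact ⟨⟨Finset.mem_univ _, hadj, by rw [h1]; exact fun hh => h2 hh.symm⟩, h1⟩
  -- Step 3 : 3c ≤ D.card
  have step3 : 3 * numComp (G.deleteEdges A) ≤ D.card := by
    have hfib : D.card = ∑ C : (G.deleteEdges A).ConnectedComponent,
        (D.filter (fun p => f p.1 = C)).card :=
      Finset.card_eq_sum_card_fiberwise (fun p _ => Finset.mem_univ (f p.1))
    rw [hfib, hcc]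
    calc 3 * Fintype.card (G.deleteEdges A).ConnectedComponent
        = ∑ _C : (G.deleteEdges A).ConnectedComponent, 3 := by
          rw [Finset.sum_const, smul_eq_mul, mul_comm]; rfl
      _ ≤ _ := Finset.sum_le_sum (fun C _ => step2 C)
  constructor
  · exact step3.trans step1
  rintro k hk ⟨col⟩
  have hrep : ∀ C : (G.deleteEdges A).ConnectedComponent, ∃ v, f v = C := fun C => C.exists_rep
  choose rep hrepp using hrep
  set h : (G.deleteEdges A).ConnectedComponent → Fin k := fun C => col (rep C) with hhdef
  have clique : ∀ C C', C ≠ C' → h C = h C' →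
      ∃ p : V × V, p ∈ D ∧ f p.1 = C ∧ f p.2 = C' := by
    intro C C' hne hcol
    refine ⟨(rep C, rep C'), ?_, hrepp C, hrepp C'⟩
    have hfne : f (rep C) ≠ f (rep C') := by rw [hrepp C, hrepp C']; exact hne
    have hvne : rep C ≠ rep C' := fun e => hfne (by rw [e])
    have hadj : G.Adj (rep C) (rep C') := by
      by_contra hna
      exact col.valid ((compl_adj G (rep C) (rep C')).mpr ⟨hvne, hna⟩) hcol
    rw [hDdef, Finset.mem_filter]
    exact ⟨Finset.mem_univ _, hadj, hfne⟩
  by_cases hall : ∀ C C' : (G.deleteEdges A).ConnectedComponent, h C = h C'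
  · -- all components share one clique class
    have h2 : numComp (G.deleteEdges A) * numComp (G.deleteEdges A)
        - numComp (G.deleteEdges A) ≤ D.card := by
      rw [hcc, ← Finset.card_univ, ← Finset.offDiag_card]
      refine Finset.card_le_card_of_surjOn (fun p : V × V => (f p.1, f p.2)) ?_
      rintro ⟨C, C'⟩ hCC
      rw [Finset.mem_coe, Finset.mem_offDiag] at hCC
      obtain ⟨-, -, hne⟩ := hCC
      obtain ⟨p, hp, e1, e2⟩ := clique C C' hne (hall C C')
      exact ⟨p, hp, by rw [Prod.ext_iff]; exact ⟨e1, e2⟩⟩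
    rcases le_or_gt (numComp (G.deleteEdges A)) 6 with hc6 | hc6
    · omega
    · have h7 : 7 * numComp (G.deleteEdges A) ≤
          numComp (G.deleteEdges A) * numComp (G.deleteEdges A) :=
        Nat.mul_le_mul_right _ (by omega)
      obtain ⟨q, hq⟩ : ∃ q, numComp (G.deleteEdges A) * numComp (G.deleteEdges A) = q := ⟨_, rfl⟩
      rw [hq] at h2 h7
      omega
  · -- no class contains all components
    push_neg at hall
    obtain ⟨C0, C0', hC0⟩ := hall
    have hex : ∀ j : Fin k, ∃ C, h C ≠ j := by
      intro j
      by_cases hj : h C0 = j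
      · exact ⟨C0', fun e => hC0 (hj.trans e.symm)⟩
      · exact ⟨C0, hj⟩
    have bound4 : ∀ j : Fin k,
        4 * (Finset.univ.filter (fun C => h C = j)).card ≤
          (D.filter (fun p => h (f p.1) = j)).card + 3 := by
      intro j
      set W : Finset (G.deleteEdges A).ConnectedComponent :=
        Finset.univ.filter (fun C => h C = j) with hWdef
      rcases W.eq_empty_or_nonempty with hWe | ⟨C0j, hC0j⟩
      · rw [hWe]; simp
      have hC0jW : h C0j = j := by
        rw [hWdef, Finset.mem_filter] at hC0j; exact hC0j.2
      set Dj := D.filter (fun p => h (f p.1) = j) with hDjdef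
      have boundA : 3 * W.card ≤ Dj.card := by
        have hfib : Dj.card = ∑ C ∈ W, (Dj.filter (fun p => f p.1 = C)).card := by
          refine Finset.card_eq_sum_card_fiberwise ?_
          intro p hp
          rw [hDjdef, Finset.mem_coe, Finset.mem_filter] at hp
          rw [Finset.mem_coe, hWdef, Finset.mem_filter]
          exact ⟨Finset.mem_univ _, hp.2⟩
        rw [hfib]
        calc 3 * W.card = ∑ _C ∈ W, 3 := by rw [Finset.sum_const, smul_eq_mul, mul_comm]
          _ ≤ _ := by
            refine Finset.sum_le_sum ?_
            intro C hC
            rw [hWdef, Finset.mem_filter] at hC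
            refine (step2 C).trans (Finset.card_le_card ?_)
            intro p hp
            rw [Finset.mem_filter] at hp
            rw [Finset.mem_filter, hDjdef, Finset.mem_filter]
            exact ⟨⟨hp.1, by rw [hp.2, hC.2]⟩, hp.2⟩
      have boundB : W.card * W.card - W.card + 3 ≤ Dj.card := by
        have hsplit := Finset.card_filter_add_card_filter_not
          (s := Dj) (p := fun p => h (f p.2) = j)
        have within : W.card * W.card - W.card ≤
            (Dj.filter (fun p => h (f p.2) = j)).card := by
          rw [← Finset.offDiag_card]
          refine Finset.card_le_card_of_surjOn (fun p : V × V => (f p.1, f p.2)) ?_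
          rintro ⟨C, C'⟩ hCC
          rw [Finset.mem_coe, Finset.mem_offDiag] at hCC
          obtain ⟨hC, hC', hne⟩ := hCC
          rw [hWdef, Finset.mem_filter] at hC hC'
          obtain ⟨p, hp, e1, e2⟩ := clique C C' hne (hC.2.trans hC'.2.symm)
          refine ⟨p, ?_, by rw [Prod.ext_iff]; exact ⟨e1, e2⟩⟩
          rw [Finset.mem_coe, Finset.mem_filter, hDjdef, Finset.mem_filter]
          exact ⟨⟨hp, by rw [e1]; exact hC.2⟩, by rw [e2]; exact hC'.2⟩
        have out : 3 ≤ (Dj.filter (fun p => ¬ h (f p.2) = j)).card := by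
          obtain ⟨Cx, hCx⟩ := hex j
          refine le_trans (boundary_pairs G hG A {C | h C = j} ⟨C0j, hC0jW⟩ ?_)
            (Finset.card_le_card ?_)
          · intro hSu
            apply hCx
            have hx : Cx ∈ {C | h C = j} := by rw [hSu]; trivial
            exact hx
          · intro p hp
            simp only [Finset.mem_filter] at hp
            obtain ⟨-, hadj, h1, h2⟩ := hp
            rw [← hfdef] at h1 h2
            rw [Finset.mem_filter, hDjdef, Finset.mem_filter, hDdef, Finset.mem_filter]
            exact ⟨⟨⟨Finset.mem_univ _, hadj, fun e => h2 (by rw [← e]; exact h1)⟩, h1⟩, h2⟩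
        omega
      rcases le_or_gt W.card 3 with hs | hs
      · omega
      · rcases le_or_gt W.card 6 with hs6 | hs6
        · have h4 : 4 * W.card ≤ W.card * W.card := Nat.mul_le_mul_right _ (by omega)
          obtain ⟨q, hq⟩ : ∃ q, W.card * W.card = q := ⟨_, rfl⟩
          rw [hq] at boundB h4
          omega
        · have h7 : 7 * W.card ≤ W.card * W.card := Nat.mul_le_mul_right _ (by omega)
          obtain ⟨q, hq⟩ : ∃ q, W.card * W.card = q := ⟨_, rfl⟩
          rw [hq] at boundB h7
          omega
    have hDsum : D.card = ∑ j : Fin k, (D.filter (fun p => h (f p.1) = j)).card :=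
      Finset.card_eq_sum_card_fiberwise (fun p _ => Finset.mem_univ _)
    have hWsum : ∑ j : Fin k, (Finset.univ.filter (fun C => h C = j)).card
        = numComp (G.deleteEdges A) := by
      rw [hcc, ← Finset.card_univ]
      exact (Finset.card_eq_sum_card_fiberwise (fun C _ => Finset.mem_univ (h C))).symm
    calc 4 * numComp (G.deleteEdges A)
        = ∑ j : Fin k, 4 * (Finset.univ.filter (fun C => h C = j)).card := by
          rw [← Finset.mul_sum, hWsum]
      _ ≤ ∑ j : Fin k, ((D.filter (fun p => h (f p.1) = j)).card + 3) :=
          Finset.sum_le_sum (fun j _ => bound4 j)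
      _ = D.card + 3 * k := by
          rw [Finset.sum_add_distrib, ← hDsum, Finset.sum_const, Finset.card_univ,
            Fintype.card_fin, smul_eq_mul, mul_comm]
      _ ≤ 2 * A.ncard + 3 * k := by omega

open Finset in
open scoped Classical in
/-- If `G` is a 3-edge-connected finite simple graph of order `n` that is not complete,
then `y_G ≤ min {⌊n/2⌋ - 1, ⌊3 χ(Gᶜ)/2⌋ - 1}`. -/
theorem yMax_le_of_three_edgeConnected_not_complete {V : Type*} [Finite V]
    (G : SimpleGraph V) (hG : EdgeConnected G 3) (hnc : G ≠ ⊤)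
    (n : ℕ) (hn : Nat.card V = n) :
    yMax G ≤ ((n / 2 : ℕ) : ℤ) - 1 ∧
    yMax G ≤ ((3 * (Gᶜ).chromaticNumber.toNat / 2 : ℕ) : ℤ) - 1 := by
  haveI : Fintype V := Fintype.ofFinite V
  set k := (Gᶜ).chromaticNumber.toNat with hkdef
  have hcol : (Gᶜ).Colorable k := (Gᶜ).colorable_chromaticNumber_of_fintype
  have hk2 : 2 ≤ k := by
    obtain ⟨u, v, huv, hna⟩ : ∃ u v, u ≠ v ∧ ¬ G.Adj u v := by
      by_contra hcontra
      push_neg at hcontra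
      apply hnc
      ext u v
      simp only [top_adj]
      exact ⟨Adj.ne, fun hne => hcontra u v hne⟩
    obtain ⟨col⟩ := hcol
    have hcv := col.valid ((compl_adj G u v).mpr ⟨huv, hna⟩)
    by_contra hk
    push_neg at hk
    haveI : Subsingleton (Fin k) := by
      apply Fintype.card_le_one_iff_subsingleton.mp
      simp only [Fintype.card_fin]
      omega
    exact hcv (Subsingleton.elim _ _)
  have hn2 : 1 < Nat.card V := hG.1
  haveI : Nonempty V := by
    rcases isEmpty_or_nonempty V with he | h
    · simp [Nat.card_eq_fintype_card] at hn2
    · exact h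
  have hn4 : 4 ≤ n := by
    obtain v := Classical.arbitrary V
    have hv3 : 3 ≤ G.degree v := by
      by_contra hlt
      push_neg at hlt
      have hlt' : (G.incidenceSet v).ncard < 3 := by
        have heq : (G.incidenceSet v).ncard = G.degree v := by
          rw [Set.ncard_eq_toFinset_card', Set.toFinset_card, G.card_incidenceSet_eq_degree]
        omega
      have hcon := hG.2 (G.incidenceSet v) (G.incidenceSet_subset v) hlt'
      obtain ⟨w, hw⟩ := Fintype.exists_ne_of_one_lt_card
        (by rwa [Nat.card_eq_fintype_card] at hn2) v
      obtain ⟨p⟩ := hcon.preconnected v w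
      cases p with
      | nil => exact hw rfl
      | cons h p =>
        rw [deleteEdges_adj] at h
        exact h.2 (G.mk'_mem_incidenceSet_left_iff.mpr h.1)
    have hins : (insert v (G.neighborFinset v)).card = G.degree v + 1 :=
      Finset.card_insert_of_notMem (by simp)
    have hle : (insert v (G.neighborFinset v)).card ≤ Fintype.card V :=
      (Finset.card_le_univ _).trans_eq Finset.card_univ
    rw [← hn, Nat.card_eq_fintype_card]
    omega
  have main : ∀ A ⊆ G.edgeSet,
      yVal G A ≤ ((n / 2 : ℕ) : ℤ) - 1 ∧ yVal G A ≤ ((3 * k / 2 : ℕ) : ℤ) - 1 := by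
    intro A hA
    have hc1 : 1 ≤ numComp (G.deleteEdges A) := by
      have : Nonempty (G.deleteEdges A).ConnectedComponent :=
        ⟨(G.deleteEdges A).connectedComponentMk (Classical.arbitrary V)⟩
      exact Nat.card_pos
    have hcn : numComp (G.deleteEdges A) ≤ n := by
      rw [← hn]
      exact Nat.card_le_card_of_surjective (G.deleteEdges A).connectedComponentMk
        (fun C => C.exists_rep)
    rw [yVal]
    rcases eq_or_lt_of_le hc1 with hc | hc
    · rw [← hc]
      constructor <;> · push_cast; omega
    · obtain ⟨hI, hII⟩ := key_counting G hG hA hc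
      have hII' := hII k hk2 hcol
      constructor <;> omega
  unfold yMax
  constructor
  · refine csSup_le ⟨yVal G ∅, ∅, Set.empty_subset _, rfl⟩ ?_
    rintro y ⟨A, hA, rfl⟩
    exact (main A hA).1
  · refine csSup_le ⟨yVal G ∅, ∅, Set.empty_subset _, rfl⟩ ?_
    rintro y ⟨A, hA, rfl⟩
    exact (main A hA).2
end

section
/- Let G be a connected finite simple graph, let A be an edge subset of minimum cardinality among those satisfying y_G(A) = y_G, where y_G ≥ 2, let W ⊆ V(G) be a set of vertices inducing a complete subgraph of G, and let F be a connected component of G − A with V(F) ∩ W ≠ ∅. If W is not contained in V(F), then 2 ≤ |W| ≤ 3. -/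
open SimpleGraph

/-- A purely arithmetic helper. -/
lemma arith_helper (n k : ℕ) (hk : 2 ≤ k) (hkn : k ≤ n) (hn : 4 ≤ n) :
    4 * k - 4 ≤ k * k - k + 2 * (n - k) := by
  rcases le_or_gt k 3 with hk3 | hk3
  · interval_cases k <;> omega
  · have h1 : 5 * k ≤ k * k + 4 := by nlinarith
    omega

/-- If `A` is a smallest edge subset with `y_G(A) = y_G ≥ 2`, `W` induces a complete
subgraph of `G`, and `F` is a component of `G - A` with `V(F) ∩ W ≠ ∅` and `W ⊄ V(F)`,
then `2 ≤ |W| ≤ 3`. -/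
theorem clique_card_between_two_and_three {V : Type*} [Finite V]
    (G : SimpleGraph V) (hG : G.Connected)
    (A : Set (Sym2 V)) (hA : A ⊆ G.edgeSet) (hy : yMax G = yVal G A)
    (hmin : ∀ B ⊆ G.edgeSet, yMax G = yVal G B → A.ncard ≤ B.ncard)
    (h2 : 2 ≤ yMax G)
    (W : Set V) (hW : G.IsClique W)
    (c : (G.deleteEdges A).ConnectedComponent)
    (hmeet : (c.supp ∩ W).Nonempty)
    (hns : ¬ W ⊆ c.supp) :
    2 ≤ W.ncard ∧ W.ncard ≤ 3 := by
  classical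
  have hfinV : Fintype V := Fintype.ofFinite V
  -- yMax is an upper bound on all the yVal's
  have hbdd : BddAbove { y : ℤ | ∃ A ⊆ G.edgeSet, yVal G A = y } := by
    refine ⟨2 * (Nat.card V) + 1, ?_⟩
    rintro y ⟨C, hC, rfl⟩
    have h1 : numComp (G.deleteEdges C) ≤ Nat.card V :=
      Nat.card_le_card_of_surjective (G.deleteEdges C).connectedComponentMk
        (fun d => d.exists_rep)
    have h0 : (0:ℤ) ≤ (C.ncard : ℤ) := Int.ofNat_nonneg _
    have h1' : (numComp (G.deleteEdges C) : ℤ) ≤ (Nat.card V : ℤ) := by exact_mod_cast h1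
    simp only [yVal]
    linarith
  have hle : ∀ B ⊆ G.edgeSet, yVal G B ≤ yVal G A := by
    intro B hB
    rw [← hy]
    exact le_csSup hbdd ⟨B, hB, rfl⟩
  -- extract the two witnesses
  obtain ⟨w₀, hw₀c, hw₀W⟩ := hmeet
  obtain ⟨w₁, hw₁W, hw₁c⟩ := Set.not_subset.mp hns
  have hne01 : w₀ ≠ w₁ := fun h => hw₁c (h ▸ hw₀c)
  have hWfin : W.Finite := Set.toFinite W
  have hlow : 2 ≤ W.ncard :=
    (Set.one_lt_ncard hWfin).mpr ⟨w₀, hw₀W, w₁, hw₁W, hne01⟩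
  refine ⟨hlow, ?_⟩
  by_contra hn4
  push_neg at hn4
  -- now W.ncard ≥ 4
  have hn4' : 4 ≤ W.ncard := hn4
  -- components of G - A
  set comp : V → (G.deleteEdges A).ConnectedComponent :=
    (G.deleteEdges A).connectedComponentMk with hcompdef
  have hw₀comp : comp w₀ = c := (ConnectedComponent.mem_supp_iff c w₀).mp hw₀c
  have hw₁comp : comp w₁ ≠ c := fun h => hw₁c ((ConnectedComponent.mem_supp_iff c w₁).mpr h)
  have hcomp01 : comp w₀ ≠ comp w₁ := fun h => hw₁comp (h ▸ hw₀comp)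
  -- the set of edges of A inside W
  set X : Set (Sym2 V) := {e | e ∈ A ∧ ∀ v ∈ e, v ∈ W} with hXdef
  have hXsubA : X ⊆ A := fun e he => he.1
  set B : Set (Sym2 V) := A \ X with hBdef
  have hBsubA : B ⊆ A := Set.diff_subset
  have hBsubE : B ⊆ G.edgeSet := fun e he => hA (hBsubA he)
  -- crossing clique edges are in X
  have hcross : ∀ u v : V, u ∈ W → v ∈ W → comp u ≠ comp v → s(u, v) ∈ X := by
    intro u v hu hv hne
    have huv : u ≠ v := fun h => hne (h ▸ rfl)
    have hadj : G.Adj u v := hW hu hv huv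
    have hmemA : s(u, v) ∈ A := by
      by_contra hA'
      exact hne (ConnectedComponent.connectedComponentMk_eq_of_adj
        ((G.deleteEdges_adj).mpr ⟨hadj, hA'⟩))
    refine ⟨hmemA, ?_⟩
    intro z hz
    rcases Sym2.mem_iff.mp hz with rfl | rfl
    · exact hu
    · exact hv
  -- adjacency in G - B for vertices of W in different components of G - A
  have hBadj : ∀ u v : V, u ∈ W → v ∈ W → comp u ≠ comp v → (G.deleteEdges B).Adj u v := by
    intro u v hu hv hne
    have huv : u ≠ v := fun h => hne (h ▸ rfl)
    refine (G.deleteEdges_adj).mpr ⟨hW hu hv huv, ?_⟩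
    intro hmem
    exact hmem.2 (hcross u v hu hv hne)
  have hGAleGB : G.deleteEdges A ≤ G.deleteEdges B := by
    intro u v h
    rw [deleteEdges_adj] at h ⊢
    exact ⟨h.1, fun hB => h.2 hB.1⟩
  set compB : V → (G.deleteEdges B).ConnectedComponent :=
    (G.deleteEdges B).connectedComponentMk with hcompBdef
  -- all of W lies in one component of G - B
  have hone : ∀ u ∈ W, ∀ v ∈ W, compB u = compB v := by
    intro u hu v hv
    by_cases h : comp u = comp v
    · exact ConnectedComponent.sound ((ConnectedComponent.exact h).mono hGAleGB)
    · exact ConnectedComponent.connectedComponentMk_eq_of_adj (hBadj u v hu hv h)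
  -- walk lemma : a walk in G - B crossing components of G - A starts in a component meeting W
  have hwalk : ∀ (u v : V) (_ : (G.deleteEdges B).Walk u v),
      comp u ≠ comp v → ∃ w ∈ W, comp w = comp u := by
    intro u v p
    induction p with
    | nil => intro h; exact absurd rfl h
    | @cons a b d hab p ih =>
      intro hne
      by_cases hc : comp a = comp b
      · have hbd : comp b ≠ comp d := fun h => hne (hc.trans h)
        obtain ⟨x, hx, hcx⟩ := ih hbd
        exact ⟨x, hx, hcx.trans hc.symm⟩
      · have hGadj : G.Adj a b ∧ s(a, b) ∉ B := (G.deleteEdges_adj).mp hab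
        have hmemA : s(a, b) ∈ A := by
          by_contra hA'
          exact hc (ConnectedComponent.connectedComponentMk_eq_of_adj
            ((G.deleteEdges_adj).mpr ⟨hGadj.1, hA'⟩))
        have hmemX : s(a, b) ∈ X := by
          by_contra hX'
          exact hGadj.2 ⟨hmemA, hX'⟩
        exact ⟨a, hmemX.2 a (Sym2.mem_mk_left a b), rfl⟩
  -- the induced map from components of G-A to components of G-B
  set φ : (G.deleteEdges A).ConnectedComponent → (G.deleteEdges B).ConnectedComponent :=
    SimpleGraph.ConnectedComponent.map (SimpleGraph.Hom.ofLE hGAleGB) with hφdef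
  have hφmk : ∀ v : V, φ (comp v) = compB v := fun v => rfl
  -- components meeting W
  set T : Set ((G.deleteEdges A).ConnectedComponent) := comp '' W with hTdef
  -- key injectivity claim
  have hkey : ∀ u v : V, compB u = compB v → comp u ≠ comp v → comp u ∈ T := by
    intro u v hB huv
    have hreach : (G.deleteEdges B).Reachable u v := ConnectedComponent.exact hB
    obtain ⟨p⟩ := hreach
    obtain ⟨w, hw, hcw⟩ := hwalk u v p huv
    exact ⟨w, hw, hcw⟩
  -- finset versions
  set Wf : Finset V := hWfin.toFinset with hWfdef
  have hWfc : Wf.card = W.ncard := (Set.ncard_eq_toFinset_card W hWfin).symm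
  set n : ℕ := Wf.card with hndef
  have hn4'' : 4 ≤ n := by rw [hWfc]; exact hn4'
  have hmemWf : ∀ x, x ∈ Wf ↔ x ∈ W := fun x => Set.Finite.mem_toFinset hWfin
  set Tf : Finset ((G.deleteEdges A).ConnectedComponent) := Wf.image comp with hTfdef
  set k : ℕ := Tf.card with hkdef
  have hTcoe : T = ↑Tf := by
    ext t
    simp only [hTdef, Set.mem_image, hTfdef, Finset.coe_image, hmemWf]
    constructor
    · rintro ⟨x, hx, rfl⟩; exact ⟨x, (hmemWf x).mpr hx, rfl⟩
    · rintro ⟨x, hx, rfl⟩; exact ⟨x, (hmemWf x).mp hx, rfl⟩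
  have hTk : T.ncard = k := by rw [hTcoe]; exact Set.ncard_coe_finset Tf
  have hk2 : 2 ≤ k := by
    rw [hkdef]
    refine Finset.one_lt_card.mpr ⟨comp w₀, ?_, comp w₁, ?_, hcomp01⟩
    · exact Finset.mem_image_of_mem comp ((hmemWf w₀).mpr hw₀W)
    · exact Finset.mem_image_of_mem comp ((hmemWf w₁).mpr hw₁W)
  have hkn : k ≤ n := Finset.card_image_le
  -- component count comparison
  set cA : ℕ := numComp (G.deleteEdges A) with hcAdef
  set cB : ℕ := numComp (G.deleteEdges B) with hcBdef
  have hTfin : T.Finite := Set.toFinite T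
  have hTcfin : Tᶜ.Finite := Set.toFinite _
  have hcardA : cA = Tᶜ.ncard + k := by
    rw [hcAdef, numComp, ← Set.ncard_add_ncard_compl T hTfin hTcfin, hTk, add_comm]
  have hSinj : Set.InjOn φ Tᶜ := by
    intro c₁ hc₁ c₂ hc₂ hφeq
    by_contra hne
    obtain ⟨u, hu⟩ := c₁.exists_rep
    obtain ⟨v, hv⟩ := c₂.exists_rep
    subst hu; subst hv
    exact hc₁ (hkey u v hφeq (fun h => hne h))
  have hSimg : φ '' Tᶜ ⊆ {compB w₀}ᶜ := by
    rintro t ⟨c₁, hc₁, rfl⟩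
    intro ht
    simp only [Set.mem_singleton_iff] at ht
    obtain ⟨u, hu⟩ := c₁.exists_rep
    subst hu
    have hne : comp u ≠ comp w₀ := by
      intro h
      exact hc₁ ⟨w₀, hw₀W, h.symm⟩
    have : compB u = compB w₀ := ht
    exact hc₁ (hkey u w₀ this hne)
  have hcard1 : Tᶜ.ncard + 1 ≤ cB := by
    have h1 : (φ '' Tᶜ).ncard = Tᶜ.ncard := Set.ncard_image_of_injOn hSinj
    have hdisj : Disjoint {compB w₀} (φ '' Tᶜ) := by
      rw [Set.disjoint_left]
      rintro t ht htm
      exact hSimg htm ht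
    have h2 : ({compB w₀} ∪ φ '' Tᶜ).ncard = 1 + Tᶜ.ncard := by
      rw [Set.ncard_union_eq hdisj (Set.toFinite _) (Set.toFinite _),
        Set.ncard_singleton, h1]
    have h3 : ({compB w₀} ∪ φ '' Tᶜ).ncard ≤ cB := by
      rw [hcBdef, numComp, ← Set.ncard_univ]
      exact Set.ncard_le_ncard (Set.subset_univ _) (Set.toFinite _)
    omega
  -- cardinality of X lower bound via ordered crossing pairs
  have hXfin : X.Finite := Set.toFinite X
  set Xf : Finset (Sym2 V) := hXfin.toFinset with hXfdef
  set m : ℕ := X.ncard with hmdef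
  have hXfc : Xf.card = m := (Set.ncard_eq_toFinset_card X hXfin).symm
  set Qf : Finset (V × V) := (Wf ×ˢ Wf).filter (fun p => comp p.1 ≠ comp p.2) with hQfdef
  have hQmem : ∀ p : V × V, p ∈ Qf ↔ p.1 ∈ W ∧ p.2 ∈ W ∧ comp p.1 ≠ comp p.2 := by
    intro p
    simp only [hQfdef, Finset.mem_filter, Finset.mem_product, hmemWf]
    tauto
  -- Qf.card ≤ 2 * m
  have hQ2m : Qf.card ≤ 2 * m := by
    have himgsub : Qf.image (fun p : V × V => s(p.1, p.2)) ⊆ Xf := by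
      intro e he
      obtain ⟨⟨u, v⟩, hm, rfl⟩ := Finset.mem_image.mp he
      obtain ⟨hu, hv, hne⟩ := (hQmem (u, v)).mp hm
      exact (Set.Finite.mem_toFinset hXfin).mpr (hcross u v hu hv hne)
    have hfib : ∀ a ∈ Qf.image (fun p : V × V => s(p.1, p.2)),
        (Qf.filter (fun p : V × V => s(p.1, p.2) = a)).card ≤ 2 := by
      intro a ha
      obtain ⟨⟨u, v⟩, hm, rfl⟩ := Finset.mem_image.mp ha
      have hsub : Qf.filter (fun p : V × V => s(p.1, p.2) = s(u, v)) ⊆ {(u, v), (v, u)} := by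
        intro ⟨x, y⟩ hxy
        rw [Finset.mem_filter] at hxy
        rcases Sym2.eq_iff.mp hxy.2 with ⟨rfl, rfl⟩ | ⟨rfl, rfl⟩
        · exact Finset.mem_insert_self _ _
        · exact Finset.mem_insert_of_mem (Finset.mem_singleton_self _)
      calc (Qf.filter (fun p : V × V => s(p.1, p.2) = s(u, v))).card
          ≤ ({(u, v), (v, u)} : Finset (V × V)).card := Finset.card_le_card hsub
        _ ≤ 2 := (Finset.card_insert_le _ _).trans (by simp)
    calc Qf.card ≤ 2 * (Qf.image (fun p : V × V => s(p.1, p.2))).card :=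
          Finset.card_le_mul_card_image _ 2 hfib
      _ ≤ 2 * Xf.card := by
          exact Nat.mul_le_mul_left 2 (Finset.card_le_card himgsub)
      _ = 2 * m := by rw [hXfc]
  -- representatives
  have hrex : ∀ t ∈ Tf, ∃ w ∈ Wf, comp w = t := by
    intro t ht
    obtain ⟨w, hw, hcw⟩ := Finset.mem_image.mp ht
    exact ⟨w, hw, hcw⟩
  set r : (G.deleteEdges A).ConnectedComponent → V := fun t =>
    if h : ∃ w ∈ Wf, comp w = t then h.choose else w₀ with hrdef
  have hr1 : ∀ t ∈ Tf, r t ∈ Wf := by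
    intro t ht
    simp only [hrdef]
    rw [dif_pos (hrex t ht)]
    exact (hrex t ht).choose_spec.1
  have hr2 : ∀ t ∈ Tf, comp (r t) = t := by
    intro t ht
    simp only [hrdef]
    rw [dif_pos (hrex t ht)]
    exact (hrex t ht).choose_spec.2
  set Rf : Finset V := Tf.image r with hRfdef
  have hRsubW : Rf ⊆ Wf := by
    intro x hx
    obtain ⟨t, ht, rfl⟩ := Finset.mem_image.mp hx
    exact hr1 t ht
  have hrinj : Set.InjOn r ↑Tf := by
    intro t₁ ht₁ t₂ ht₂ heq
    rw [← hr2 t₁ ht₁, ← hr2 t₂ ht₂, heq]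
  have hRcard : Rf.card = k := by
    rw [hRfdef, Finset.card_image_of_injOn hrinj]
  have hcompR : ∀ x ∈ Rf, ∀ y ∈ Rf, comp x = comp y → x = y := by
    intro x hx y hy heq
    obtain ⟨t₁, ht₁, rfl⟩ := Finset.mem_image.mp hx
    obtain ⟨t₂, ht₂, rfl⟩ := Finset.mem_image.mp hy
    rw [hr2 t₁ ht₁, hr2 t₂ ht₂] at heq
    rw [heq]
  -- partner function
  have hpart : ∀ x : V, ∃ rp, rp ∈ Rf ∧ comp rp ≠ comp x := by
    intro x
    obtain ⟨t, ht, hnet⟩ := Finset.exists_mem_ne hk2 (comp x)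
    exact ⟨r t, Finset.mem_image_of_mem r ht, by rw [hr2 t ht]; exact hnet⟩
  choose p hp1 hp2 using hpart
  -- three disjoint subsets of Qf
  set Q₁ : Finset (V × V) := Rf.offDiag with hQ₁def
  set Q₂ : Finset (V × V) := (Wf \ Rf).image (fun x => (x, p x)) with hQ₂def
  set Q₃ : Finset (V × V) := (Wf \ Rf).image (fun x => (p x, x)) with hQ₃def
  have hQ₁sub : Q₁ ⊆ Qf := by
    intro q hq
    obtain ⟨ha, hb, hab⟩ := Finset.mem_offDiag.mp hq
    refine (hQmem q).mpr ⟨(hmemWf _).mp (hRsubW ha), (hmemWf _).mp (hRsubW hb), ?_⟩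
    intro heq
    exact hab (hcompR _ ha _ hb heq)
  have hQ₂sub : Q₂ ⊆ Qf := by
    intro q hq
    obtain ⟨x, hx, rfl⟩ := Finset.mem_image.mp hq
    have hxW := (Finset.mem_sdiff.mp hx).1
    refine (hQmem _).mpr ⟨(hmemWf _).mp hxW, (hmemWf _).mp (hRsubW (hp1 x)), ?_⟩
    exact fun h => hp2 x h.symm
  have hQ₃sub : Q₃ ⊆ Qf := by
    intro q hq
    obtain ⟨x, hx, rfl⟩ := Finset.mem_image.mp hq
    have hxW := (Finset.mem_sdiff.mp hx).1
    refine (hQmem _).mpr ⟨(hmemWf _).mp (hRsubW (hp1 x)), (hmemWf _).mp hxW, ?_⟩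
    exact hp2 x
  have hQ₁card : Q₁.card = k * k - k := by
    rw [hQ₁def, Finset.offDiag_card, hRcard]
  have hQ₂card : Q₂.card = n - k := by
    rw [hQ₂def, Finset.card_image_of_injOn (fun x _ y _ h => congrArg Prod.fst h),
      Finset.card_sdiff_of_subset hRsubW, hRcard]
  have hQ₃card : Q₃.card = n - k := by
    rw [hQ₃def, Finset.card_image_of_injOn (fun x _ y _ h => congrArg Prod.snd h),
      Finset.card_sdiff_of_subset hRsubW, hRcard]
  have hd12 : Disjoint Q₁ Q₂ := by
    rw [Finset.disjoint_left]
    intro q hq1 hq2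
    obtain ⟨x, hx, rfl⟩ := Finset.mem_image.mp hq2
    exact (Finset.mem_sdiff.mp hx).2 (Finset.mem_offDiag.mp hq1).1
  have hd13 : Disjoint Q₁ Q₃ := by
    rw [Finset.disjoint_left]
    intro q hq1 hq3
    obtain ⟨x, hx, rfl⟩ := Finset.mem_image.mp hq3
    exact (Finset.mem_sdiff.mp hx).2 (Finset.mem_offDiag.mp hq1).2.1
  have hd23 : Disjoint Q₂ Q₃ := by
    rw [Finset.disjoint_left]
    intro q hq2 hq3
    obtain ⟨x, hx, rfl⟩ := Finset.mem_image.mp hq2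
    obtain ⟨y, hy, heq⟩ := Finset.mem_image.mp hq3
    have : p y = x := congrArg Prod.fst heq
    exact (Finset.mem_sdiff.mp hx).2 (this ▸ hp1 y)
  have hQlower : k * k - k + 2 * (n - k) ≤ Qf.card := by
    have hsub : Q₁ ∪ Q₂ ∪ Q₃ ⊆ Qf := by
      intro q hq
      rcases Finset.mem_union.mp hq with hq' | hq'
      · rcases Finset.mem_union.mp hq' with h | h
        · exact hQ₁sub h
        · exact hQ₂sub h
      · exact hQ₃sub hq'
    have hcardu : (Q₁ ∪ Q₂ ∪ Q₃).card = Q₁.card + Q₂.card + Q₃.card := by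
      rw [Finset.card_union_of_disjoint, Finset.card_union_of_disjoint hd12]
      rw [Finset.disjoint_union_left]
      exact ⟨hd13, hd23⟩
    calc k * k - k + 2 * (n - k) = Q₁.card + Q₂.card + Q₃.card := by
          rw [hQ₁card, hQ₂card, hQ₃card]; omega
      _ = (Q₁ ∪ Q₂ ∪ Q₃).card := hcardu.symm
      _ ≤ Qf.card := Finset.card_le_card hsub
  -- lower bound on m
  have hm2k : 2 * k - 2 ≤ m := by
    have := arith_helper n k hk2 hkn hn4''
    omega
  -- B is strictly smaller than A
  have hXne : s(w₀, w₁) ∈ X := hcross w₀ w₁ hw₀W hw₁W hcomp01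
  have hAfin : A.Finite := Set.toFinite A
  have hBltA : B.ncard < A.ncard := by
    refine Set.ncard_lt_ncard ?_ hAfin
    refine (Set.ssubset_iff_of_subset hBsubA).mpr ⟨s(w₀, w₁), hXsubA hXne, ?_⟩
    intro hmem
    exact hmem.2 hXne
  -- yVal of B is strictly less than yVal of A
  have hlt : yVal G B < yVal G A := by
    refine lt_of_le_of_ne (hle B hBsubE) ?_
    intro heq
    have hyB : yMax G = yVal G B := hy.trans heq.symm
    have := hmin B hBsubE hyB
    omega
  -- translate into the numeric inequality
  have hmA : m ≤ A.ncard := Set.ncard_le_ncard hXsubA hAfin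
  have hBn : B.ncard = A.ncard - m := by
    rw [hBdef, Set.ncard_diff hXsubA hXfin]
  have hltnum : 2 * cB + m < 2 * cA := by
    have h1 : (2:ℤ) * cB - (B.ncard : ℤ) - 1 < 2 * cA - (A.ncard : ℤ) - 1 := hlt
    rw [hBn] at h1
    have h2 : ((A.ncard - m : ℕ) : ℤ) = (A.ncard : ℤ) - (m : ℤ) := by
      exact Nat.cast_sub hmA
    rw [h2] at h1
    have : (2:ℤ) * cB + m < 2 * cA := by linarith
    exact_mod_cast this
  -- final contradiction
  omega
end

section
/- Let n ≥ 2 be an even integer. Then for the path P_n on n vertices, y_{P_n} = n = 2·χ(P_n^c), and, if n ≥ 4, for the cycle C_n on n vertices, y_{C_n} = n − 1 = 2·χ(C_n^c) − 1, where χ denotes the chromatic number and ^c the graph complement. -/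
open SimpleGraph

section Aux

variable {V : Type*}

private lemma reachable_delete_cases (H : SimpleGraph V) (a b : V) {x y : V}
    (h : H.Reachable x y) :
    (H.deleteEdges {s(a,b)}).Reachable x y ∨
      ((H.deleteEdges {s(a,b)}).Reachable x a ∧ (H.deleteEdges {s(a,b)}).Reachable b y) ∨
      ((H.deleteEdges {s(a,b)}).Reachable x b ∧ (H.deleteEdges {s(a,b)}).Reachable a y) := by
  obtain ⟨w⟩ := h
  induction w with
  | nil => exact Or.inl (Reachable.refl _)
  | @cons x z y hxz p ih =>
    by_cases he : s(x, z) = s(a, b)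
    · rw [Sym2.eq_iff] at he
      rcases he with ⟨rfl, rfl⟩ | ⟨rfl, rfl⟩
      · rcases ih with h1 | ⟨h1, h2⟩ | ⟨h1, h2⟩
        · exact Or.inr (Or.inl ⟨Reachable.refl _, h1⟩)
        · exact Or.inl (h1.symm.trans h2)
        · exact Or.inl h2
      · rcases ih with h1 | ⟨h1, h2⟩ | ⟨h1, h2⟩
        · exact Or.inr (Or.inr ⟨Reachable.refl _, h1⟩)
        · exact Or.inl h2
        · exact Or.inl (h1.symm.trans h2)
    · have hxz' : (H.deleteEdges {s(a,b)}).Adj x z := by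
        rw [deleteEdges_adj]
        exact ⟨hxz, by simpa using he⟩
      rcases ih with h1 | ⟨h1, h2⟩ | ⟨h1, h2⟩
      · exact Or.inl (hxz'.reachable.trans h1)
      · exact Or.inr (Or.inl ⟨hxz'.reachable.trans h1, h2⟩)
      · exact Or.inr (Or.inr ⟨hxz'.reachable.trans h1, h2⟩)

private lemma numComp_deleteEdge_le [Finite V] (H : SimpleGraph V) (e : Sym2 V) :
    numComp (H.deleteEdges {e}) ≤ numComp H + 1 := by
  induction e using Sym2.ind with
  | _ a b =>
  set H' := H.deleteEdges {s(a,b)} with hH'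
  let ψ : H'.ConnectedComponent → H.ConnectedComponent :=
    ConnectedComponent.map (Hom.ofLE (deleteEdges_le _))
  have hψ : ∀ v, ψ (H'.connectedComponentMk v) = H.connectedComponentMk v := fun v =>
    ConnectedComponent.map_mk _ _
  have hinj : Set.InjOn ψ {H'.connectedComponentMk a}ᶜ := by
    intro C1 h1 C2 h2 heq
    obtain ⟨x, rfl⟩ := C1.exists_rep
    obtain ⟨y, rfl⟩ := C2.exists_rep
    have hqx : Quot.mk H'.Reachable x = H'.connectedComponentMk x := rfl
    have hqy : Quot.mk H'.Reachable y = H'.connectedComponentMk y := rfl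
    rw [hqx] at h1 heq ⊢
    rw [hqy] at h2 heq ⊢
    rw [hψ, hψ] at heq
    have hr := ConnectedComponent.exact heq
    rcases reachable_delete_cases H a b hr with h | ⟨ha, _⟩ | ⟨_, hb⟩
    · exact ConnectedComponent.sound h
    · exact absurd (ConnectedComponent.sound ha) h1
    · exact absurd (ConnectedComponent.sound hb).symm h2
  have himg : ({H'.connectedComponentMk a}ᶜ : Set H'.ConnectedComponent).ncard ≤ numComp H := by
    calc ({H'.connectedComponentMk a}ᶜ : Set H'.ConnectedComponent).ncard
        = (ψ '' {H'.connectedComponentMk a}ᶜ).ncard := (Set.ncard_image_of_injOn hinj).symm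
      _ ≤ (Set.univ : Set H.ConnectedComponent).ncard :=
          Set.ncard_le_ncard (Set.subset_univ _) Set.finite_univ
      _ = numComp H := Set.ncard_univ _
  calc numComp H' = (Set.univ : Set H'.ConnectedComponent).ncard := (Set.ncard_univ _).symm
    _ = (({H'.connectedComponentMk a}ᶜ ∪ {H'.connectedComponentMk a} :
          Set H'.ConnectedComponent)).ncard := by
        rw [Set.compl_union_self]
    _ ≤ ({H'.connectedComponentMk a}ᶜ : Set H'.ConnectedComponent).ncard + 1 := by
        simpa using Set.ncard_union_le
          ({H'.connectedComponentMk a}ᶜ : Set H'.ConnectedComponent) {H'.connectedComponentMk a}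
    _ ≤ numComp H + 1 := by omega

private lemma numComp_deleteEdges_le [Finite V] (H : SimpleGraph V) (A : Set (Sym2 V)) :
    numComp (H.deleteEdges A) ≤ numComp H + A.ncard := by
  have hA : A.Finite := A.toFinite
  refine Set.Finite.induction_on
    (motive := fun A _ => numComp (H.deleteEdges A) ≤ numComp H + A.ncard) A hA ?_ ?_
  · simpa using le_refl _
  · intro e A' he hfin ih
    have hgraph : H.deleteEdges (insert e A') = (H.deleteEdges A').deleteEdges {e} := by
      rw [deleteEdges_deleteEdges, Set.union_comm, ← Set.insert_eq]
    rw [hgraph, Set.ncard_insert_of_notMem he hfin]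
    have := numComp_deleteEdge_le (H.deleteEdges A') e
    omega

private lemma numComp_bot [Finite V] : numComp (⊥ : SimpleGraph V) = Nat.card V := by
  unfold numComp
  refine (Nat.card_eq_of_bijective (fun v => (⊥ : SimpleGraph V).connectedComponentMk v)
    ⟨?_, ?_⟩).symm
  · intro x y h
    exact reachable_bot.mp (ConnectedComponent.exact h)
  · intro C
    exact C.exists_rep

private lemma numComp_connected {H : SimpleGraph V} (h : H.Connected) : numComp H = 1 := by
  rw [numComp, Nat.card_eq_one_iff_unique]
  constructor
  · constructor
    intro C D
    obtain ⟨x, rfl⟩ := C.exists_rep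
    obtain ⟨y, rfl⟩ := D.exists_rep
    exact ConnectedComponent.sound (h.preconnected x y)
  · obtain ⟨v⟩ := h.nonempty
    exact ⟨H.connectedComponentMk v⟩

private lemma numComp_add_one_le [Finite V] {H : SimpleGraph V} {a b : V} (hab : H.Adj a b) :
    numComp H + 1 ≤ Nat.card V := by
  classical
  have hsurj : H.connectedComponentMk '' ({b}ᶜ) = Set.univ := by
    ext C
    simp only [Set.mem_image, Set.mem_univ, iff_true]
    obtain ⟨x, rfl⟩ := C.exists_rep
    by_cases hx : x = b
    · exact ⟨a, by simp [hab.ne], by rw [hx]; exact ConnectedComponent.sound hab.reachable⟩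
    · exact ⟨x, by simp [hx], rfl⟩
  have h1 : numComp H ≤ ({b}ᶜ : Set V).ncard := by
    rw [numComp, ← Set.ncard_univ, ← hsurj]
    exact Set.ncard_image_le (Set.toFinite _)
  have h2 : ({b}ᶜ : Set V).ncard + 1 = Nat.card V := by
    have hins : insert b ({b}ᶜ : Set V) = Set.univ := by
      ext x
      by_cases h : x = b <;> simp [h]
    rw [← Set.ncard_univ, ← hins, Set.ncard_insert_of_notMem (by simp) (Set.toFinite _)]
  omega

end Aux

private def pEdge (n : ℕ) (i : Fin (n - 1)) : Sym2 (Fin n) :=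
  s((⟨i.1, by have := i.2; omega⟩ : Fin n), (⟨i.1 + 1, by have := i.2; omega⟩ : Fin n))

private lemma pathGraph_edgeSet_eq (n : ℕ) :
    (pathGraph n).edgeSet = pEdge n '' Set.univ := by
  ext e
  induction e using Sym2.ind with
  | _ u v =>
    rw [mem_edgeSet, pathGraph_adj]
    constructor
    · rintro (h | h)
      · refine ⟨⟨u.1, by have := v.2; omega⟩, trivial, ?_⟩
        rw [pEdge, Sym2.eq_iff]
        exact Or.inl ⟨rfl, Fin.ext h⟩
      · refine ⟨⟨v.1, by have := u.2; omega⟩, trivial, ?_⟩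
        rw [pEdge, Sym2.eq_iff]
        exact Or.inr ⟨rfl, Fin.ext h⟩
    · rintro ⟨i, -, hi⟩
      rw [pEdge, Sym2.eq_iff] at hi
      rcases hi with ⟨h1, h2⟩ | ⟨h1, h2⟩
      · left
        rw [← h1, ← h2]
      · right
        rw [← h1, ← h2]

private lemma pEdge_injOn (n : ℕ) : Set.InjOn (pEdge n) Set.univ := by
  intro i _ j _ hij
  rw [pEdge, pEdge, Sym2.eq_iff] at hij
  apply Fin.ext
  rcases hij with ⟨h1, -⟩ | ⟨h1, h2⟩
  · have e := congrArg Fin.val h1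
    exact e
  · have e1 := congrArg Fin.val h1
    have e2 := congrArg Fin.val h2
    simp only [] at e1 e2
    omega

private lemma pathGraph_edgeSet_ncard (n : ℕ) : (pathGraph n).edgeSet.ncard = n - 1 := by
  rw [pathGraph_edgeSet_eq, Set.ncard_image_of_injOn (pEdge_injOn n), Set.ncard_univ,
    Nat.card_eq_fintype_card, Fintype.card_fin]

private lemma cycleGraph_adj_iff {n : ℕ} (hn : 4 ≤ n) {u v : Fin n} :
    (cycleGraph n).Adj u v ↔
      (u.1 + 1 = v.1 ∨ v.1 + 1 = u.1 ∨ (u.1 = 0 ∧ v.1 + 1 = n) ∨ (v.1 = 0 ∧ u.1 + 1 = n)) := by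
  obtain ⟨m, rfl⟩ : ∃ m, n = m + 2 := ⟨n - 2, by omega⟩
  have hu := u.2
  have hv := v.2
  have key : ∀ x y : ℕ, x < m + 2 → y < m + 2 →
      ((m + 2 - y + x) % (m + 2) = 1 ↔ (x = y + 1 ∨ (x = 0 ∧ y = m + 1))) := by
    intro x y hx hy
    by_cases h : m + 2 - y + x < m + 2
    · rw [Nat.mod_eq_of_lt h]
      omega
    · rw [Nat.mod_eq_sub_mod (by omega), Nat.mod_eq_of_lt (by omega)]
      omega
  rw [cycleGraph_adj, Fin.ext_iff, Fin.ext_iff, Fin.sub_def, Fin.sub_def]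
  simp only [Fin.val_one]
  rw [key u.1 v.1 hu hv, key v.1 u.1 hv hu]
  omega

private def cEdge (n : ℕ) (i : Fin n) : Sym2 (Fin n) :=
  s(i, (⟨(i.1 + 1) % n, Nat.mod_lt _ (by have := i.2; omega)⟩ : Fin n))

private lemma succ_mod (n x : ℕ) (hx : x < n) : (x + 1) % n = if x + 1 = n then 0 else x + 1 := by
  split_ifs with h
  · rw [h, Nat.mod_self]
  · exact Nat.mod_eq_of_lt (by omega)

private lemma cycleGraph_edgeSet_eq {n : ℕ} (hn : 4 ≤ n) :
    (cycleGraph n).edgeSet = cEdge n '' Set.univ := by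
  ext e
  induction e using Sym2.ind with
  | _ u v =>
    rw [mem_edgeSet, cycleGraph_adj_iff hn]
    have hu := u.2
    have hv := v.2
    constructor
    · intro h
      rcases h with h | h | ⟨h1, h2⟩ | ⟨h1, h2⟩
      · refine ⟨u, trivial, ?_⟩
        rw [cEdge, Sym2.eq_iff]
        exact Or.inl ⟨rfl, Fin.ext (show (u.1 + 1) % n = v.1 by rw [succ_mod n u.1 hu]; split_ifs <;> omega)⟩
      · refine ⟨v, trivial, ?_⟩
        rw [cEdge, Sym2.eq_iff]
        exact Or.inr ⟨rfl, Fin.ext (show (v.1 + 1) % n = u.1 by rw [succ_mod n v.1 hv]; split_ifs <;> omega)⟩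
      · refine ⟨v, trivial, ?_⟩
        rw [cEdge, Sym2.eq_iff]
        exact Or.inr ⟨rfl, Fin.ext (show (v.1 + 1) % n = u.1 by rw [succ_mod n v.1 hv]; split_ifs <;> omega)⟩
      · refine ⟨u, trivial, ?_⟩
        rw [cEdge, Sym2.eq_iff]
        exact Or.inl ⟨rfl, Fin.ext (show (u.1 + 1) % n = v.1 by rw [succ_mod n u.1 hu]; split_ifs <;> omega)⟩
    · rintro ⟨i, -, hi⟩
      have hi2 := i.2
      rw [cEdge, Sym2.eq_iff] at hi
      rcases hi with ⟨h1, h2⟩ | ⟨h1, h2⟩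
      · have e1 : i.1 = u.1 := congrArg Fin.val h1
        have e2 : (i.1 + 1) % n = v.1 := congrArg Fin.val h2
        rw [succ_mod n i.1 hi2] at e2
        split_ifs at e2 <;> omega
      · have e1 : i.1 = v.1 := congrArg Fin.val h1
        have e2 : (i.1 + 1) % n = u.1 := congrArg Fin.val h2
        rw [succ_mod n i.1 hi2] at e2
        split_ifs at e2 <;> omega

private lemma cEdge_injOn {n : ℕ} (hn : 4 ≤ n) : Set.InjOn (cEdge n) Set.univ := by
  intro i _ j _ hij
  rw [cEdge, cEdge, Sym2.eq_iff] at hij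
  have hi := i.2
  have hj := j.2
  apply Fin.ext
  rcases hij with ⟨h1, -⟩ | ⟨h1, h2⟩
  · exact congrArg Fin.val h1
  · have e1 : i.1 = (j.1 + 1) % n := congrArg Fin.val h1
    have e2 : (i.1 + 1) % n = j.1 := congrArg Fin.val h2
    rw [succ_mod n j.1 hj] at e1
    rw [succ_mod n i.1 hi] at e2
    split_ifs at e1 e2 <;> omega

private lemma cycleGraph_edgeSet_ncard {n : ℕ} (hn : 4 ≤ n) :
    (cycleGraph n).edgeSet.ncard = n := by
  rw [cycleGraph_edgeSet_eq hn, Set.ncard_image_of_injOn (cEdge_injOn hn), Set.ncard_univ,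
    Nat.card_eq_fintype_card, Fintype.card_fin]

private lemma chrom_compl_path {n : ℕ} (h2 : 2 ≤ n) (heven : Even n) :
    ((pathGraph n)ᶜ).chromaticNumber = ((n / 2 : ℕ) : ℕ∞) := by
  classical
  obtain ⟨k, hk⟩ := heven
  refine le_antisymm ?_ ?_
  · refine Colorable.chromaticNumber_le
      ⟨Coloring.mk (fun v => (⟨v.1 / 2, by have := v.2; omega⟩ : Fin (n / 2))) ?_⟩
    intro a b hadj heq
    rw [compl_adj] at hadj
    obtain ⟨hne, hnadj⟩ := hadj
    apply hnadj
    rw [pathGraph_adj]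
    have e1 : a.1 / 2 = b.1 / 2 := congrArg Fin.val heq
    have e2 : a.1 ≠ b.1 := fun h => hne (Fin.ext h)
    omega
  · rw [chromaticNumber_eq_biInf]
    refine le_iInf₂ fun m hm => ?_
    obtain ⟨C⟩ := hm
    rw [Nat.cast_le]
    have hadj : ∀ x y : Fin n, x ≠ y → C x = C y → (pathGraph n).Adj x y := by
      intro x y hxy hCxy
      by_contra hn'
      exact C.valid (by rw [compl_adj]; exact ⟨hxy, hn'⟩) hCxy
    have key : (Finset.univ : Finset (Fin n)).card ≤
        2 * ((Finset.univ : Finset (Fin n)).image C).card := by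
      apply Finset.card_le_mul_card_image
      intro col _
      by_contra hgt
      have h3 : 2 < (Finset.filter (fun a => C a = col) Finset.univ).card := by omega
      obtain ⟨x, hx, y, hy, z, hz, hxy, hxz, hyz⟩ := Finset.two_lt_card.mp h3
      rw [Finset.mem_filter] at hx hy hz
      have a1 := hadj x y hxy (hx.2.trans hy.2.symm)
      have a2 := hadj x z hxz (hx.2.trans hz.2.symm)
      have a3 := hadj y z hyz (hy.2.trans hz.2.symm)
      rw [pathGraph_adj] at a1 a2 a3
      have d1 : x.1 ≠ y.1 := fun h => hxy (Fin.ext h)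
      have d2 : x.1 ≠ z.1 := fun h => hxz (Fin.ext h)
      have d3 : y.1 ≠ z.1 := fun h => hyz (Fin.ext h)
      omega
    have him : ((Finset.univ : Finset (Fin n)).image C).card ≤ m := by
      calc ((Finset.univ : Finset (Fin n)).image C).card
          ≤ (Finset.univ : Finset (Fin m)).card := Finset.card_le_univ _
        _ = m := by rw [Finset.card_univ, Fintype.card_fin]
    rw [Finset.card_univ, Fintype.card_fin] at key
    omega

private lemma chrom_compl_cycle {n : ℕ} (h4 : 4 ≤ n) (heven : Even n) :
    ((cycleGraph n)ᶜ).chromaticNumber = ((n / 2 : ℕ) : ℕ∞) := by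
  classical
  obtain ⟨k, hk⟩ := heven
  refine le_antisymm ?_ ?_
  · refine Colorable.chromaticNumber_le
      ⟨Coloring.mk (fun v => (⟨v.1 / 2, by have := v.2; omega⟩ : Fin (n / 2))) ?_⟩
    intro a b hadj heq
    rw [compl_adj] at hadj
    obtain ⟨hne, hnadj⟩ := hadj
    apply hnadj
    rw [cycleGraph_adj_iff h4]
    have e1 : a.1 / 2 = b.1 / 2 := congrArg Fin.val heq
    have e2 : a.1 ≠ b.1 := fun h => hne (Fin.ext h)
    have ha := a.2
    have hb := b.2
    omega
  · rw [chromaticNumber_eq_biInf]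
    refine le_iInf₂ fun m hm => ?_
    obtain ⟨C⟩ := hm
    rw [Nat.cast_le]
    have hadj : ∀ x y : Fin n, x ≠ y → C x = C y → (cycleGraph n).Adj x y := by
      intro x y hxy hCxy
      by_contra hn'
      exact C.valid (by rw [compl_adj]; exact ⟨hxy, hn'⟩) hCxy
    have key : (Finset.univ : Finset (Fin n)).card ≤
        2 * ((Finset.univ : Finset (Fin n)).image C).card := by
      apply Finset.card_le_mul_card_image
      intro col _
      by_contra hgt
      have h3 : 2 < (Finset.filter (fun a => C a = col) Finset.univ).card := by omega
      obtain ⟨x, hx, y, hy, z, hz, hxy, hxz, hyz⟩ := Finset.two_lt_card.mp h3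
      rw [Finset.mem_filter] at hx hy hz
      have a1 := hadj x y hxy (hx.2.trans hy.2.symm)
      have a2 := hadj x z hxz (hx.2.trans hz.2.symm)
      have a3 := hadj y z hyz (hy.2.trans hz.2.symm)
      rw [cycleGraph_adj_iff h4] at a1 a2 a3
      have d1 : x.1 ≠ y.1 := fun h => hxy (Fin.ext h)
      have d2 : x.1 ≠ z.1 := fun h => hxz (Fin.ext h)
      have d3 : y.1 ≠ z.1 := fun h => hyz (Fin.ext h)
      have bx := x.2
      have by' := y.2
      have bz := z.2
      omega
    have him : ((Finset.univ : Finset (Fin n)).image C).card ≤ m := by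
      calc ((Finset.univ : Finset (Fin n)).image C).card
          ≤ (Finset.univ : Finset (Fin m)).card := Finset.card_le_univ _
        _ = m := by rw [Finset.card_univ, Fintype.card_fin]
    rw [Finset.card_univ, Fintype.card_fin] at key
    omega

private lemma deleteEdges_self_eq_bot {V : Type*} (G : SimpleGraph V) :
    G.deleteEdges G.edgeSet = ⊥ := by
  rw [deleteEdges_edgeSet, sdiff_self]

private lemma yVal_edgeSet {n : ℕ} (G : SimpleGraph (Fin n)) :
    yVal G G.edgeSet = 2 * (n : ℤ) - (G.edgeSet.ncard : ℤ) - 1 := by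
  rw [yVal, deleteEdges_self_eq_bot, numComp_bot, Nat.card_eq_fintype_card, Fintype.card_fin]

/-- For an even integer `n ≥ 2`, `y_{P_n} = n = 2 χ(P_nᶜ)`, and if moreover `n ≥ 4`,
`y_{C_n} = n - 1 = 2 χ(C_nᶜ) - 1`. -/
theorem yMax_pathGraph_and_cycleGraph_even (n : ℕ) (h2 : 2 ≤ n) (heven : Even n) :
    (yMax (SimpleGraph.pathGraph n) = (n : ℤ) ∧
      (n : ℤ) = 2 * (((SimpleGraph.pathGraph n)ᶜ).chromaticNumber.toNat : ℤ)) ∧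
    (4 ≤ n →
      yMax (SimpleGraph.cycleGraph n) = (n : ℤ) - 1 ∧
      (n : ℤ) - 1 = 2 * (((SimpleGraph.cycleGraph n)ᶜ).chromaticNumber.toNat : ℤ) - 1) := by
  obtain ⟨k, hk⟩ := heven
  have hPconn : (pathGraph n).Connected := by
    obtain ⟨m, rfl⟩ : ∃ m, n = m + 1 := ⟨n - 1, by omega⟩
    exact pathGraph_connected m
  constructor
  · constructor
    · -- yMax path
      have hgreat : IsGreatest { y : ℤ | ∃ A ⊆ (pathGraph n).edgeSet, yVal (pathGraph n) A = y }
          (n : ℤ) := by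
        constructor
        · refine ⟨(pathGraph n).edgeSet, le_refl _, ?_⟩
          rw [yVal_edgeSet, pathGraph_edgeSet_ncard]
          omega
        · rintro y ⟨A, hA, rfl⟩
          have hc : numComp ((pathGraph n).deleteEdges A) ≤ numComp (pathGraph n) + A.ncard :=
            numComp_deleteEdges_le _ _
          rw [numComp_connected hPconn] at hc
          have hcard : A.ncard ≤ n - 1 := by
            calc A.ncard ≤ (pathGraph n).edgeSet.ncard :=
                  Set.ncard_le_ncard hA (Set.toFinite _)
              _ = n - 1 := pathGraph_edgeSet_ncard n
          rw [yVal]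
          omega
      exact hgreat.csSup_eq
    · rw [chrom_compl_path h2 ⟨k, hk⟩, ENat.toNat_coe]
      omega
  · intro h4
    constructor
    · -- yMax cycle
      have hCconn : (cycleGraph n).Connected := by
        obtain ⟨m, rfl⟩ : ∃ m, n = m + 1 := ⟨n - 1, by omega⟩
        exact cycleGraph_connected
      have hgreat : IsGreatest { y : ℤ | ∃ A ⊆ (cycleGraph n).edgeSet, yVal (cycleGraph n) A = y }
          ((n : ℤ) - 1) := by
        constructor
        · refine ⟨(cycleGraph n).edgeSet, le_refl _, ?_⟩
          rw [yVal_edgeSet, cycleGraph_edgeSet_ncard h4]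
          omega
        · rintro y ⟨A, hA, rfl⟩
          have hcard : A.ncard ≤ n := by
            calc A.ncard ≤ (cycleGraph n).edgeSet.ncard :=
                  Set.ncard_le_ncard hA (Set.toFinite _)
              _ = n := cycleGraph_edgeSet_ncard h4
          by_cases hAE : A = (cycleGraph n).edgeSet
          · rw [hAE, yVal_edgeSet, cycleGraph_edgeSet_ncard h4]
            omega
          · have hex : ∃ e ∈ (cycleGraph n).edgeSet, e ∉ A := by
              by_contra h'
              push_neg at h'
              exact hAE (hA.antisymm h')
            obtain ⟨e, heE, heA⟩ := hex
            revert heE heA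
            induction e using Sym2.ind with
            | _ u v =>
              intro heE heA
              have hadj : ((cycleGraph n).deleteEdges A).Adj u v := by
                rw [deleteEdges_adj]
                rw [mem_edgeSet] at heE
                exact ⟨heE, heA⟩
              have h1 := numComp_add_one_le hadj
              rw [Nat.card_eq_fintype_card, Fintype.card_fin] at h1
              have hc : numComp ((cycleGraph n).deleteEdges A) ≤
                  numComp (cycleGraph n) + A.ncard := numComp_deleteEdges_le _ _
              rw [numComp_connected hCconn] at hc
              rw [yVal]
              omega
      exact hgreat.csSup_eq
    · rw [chrom_compl_cycle h4 ⟨k, hk⟩, ENat.toNat_coe]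
      omega
end
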